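/- Let q, z ∈ ℂ with q ≠ 0. Then the matrix-valued function c ↦ c⁻¹·R^Δ_{c,q}(−qz) converges, as |c| → ∞ (i.e., along the cobounded filter on ℂ), to the 4×4 matrix D(q,z) := [[1,0,0,0],[0,−q⁻¹,−(1−q²)z,0],[0,−1,−qz,0],[0,0,0,q²z]]. Moreover, the matrix obtained from D(q,z) by negating every entry except the (1,1)-entry is exactly the matrix of Δ Tokuyama ice Boltzmann weights (a₁,a₂,b₁,b₂,c₁,c₂) = (1, −q²z, q⁻¹, qz, (1−q²)z, 1) with v = q², arranged with diagonal (a₁, b₁, b₂, a₂) and with c₁ in position (2,3) and c₂ in position (3,2). -/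
import Mathlib


open Matrix Filter Bornology

/-- The R-matrix `R^Δ_{c,q}(z)` (a change-of-variables and Drinfeld-twist form of the R-matrix
coming from the `U_q(ĝl(1|1))`-representation `π_{c,c⁻¹}`). -/
noncomputable def RDel (c q z : ℂ) : Matrix (Fin 4) (Fin 4) ℂ :=
  !![c - z, 0,                 0,                       0;
     0,     -(c * q⁻¹) + z * q, (q⁻¹ - q) * (c - 1) * z, 0;
     0,     -(c + 1),           z * c - 1,               0;
     0,     0,                 0,                       q⁻¹ - z * c * q]

/-- The limiting matrix `D(q,z)`. -/
noncomputable def Dlim (q z : ℂ) : Matrix (Fin 4) (Fin 4) ℂ :=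
  !![1, 0,    0,                 0;
     0, -q⁻¹, -((1 - q ^ 2) * z), 0;
     0, -1,   -(q * z),           0;
     0, 0,    0,                 q ^ 2 * z]

/-- Negate every entry of a `4×4` matrix except the `(1,1)`-entry (index `(0,0)`). -/
def negExcept00 (A : Matrix (Fin 4) (Fin 4) ℂ) : Matrix (Fin 4) (Fin 4) ℂ :=
  Matrix.of fun i j => if i = 0 ∧ j = 0 then A i j else -(A i j)

/-- The matrix of Δ Tokuyama ice Boltzmann weights `(a₁,a₂,b₁,b₂,c₁,c₂)`, arranged with
diagonal `(a₁, b₁, b₂, a₂)`, `c₁` in position `(2,3)` and `c₂` in position `(3,2)`. -/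
def wtMat (a₁ a₂ b₁ b₂ c₁ c₂ : ℂ) : Matrix (Fin 4) (Fin 4) ℂ :=
  !![a₁, 0,  0,  0;
     0,  b₁, c₁, 0;
     0,  c₂, b₂, 0;
     0,  0,  0,  a₂]

theorem stmt19 (q z : ℂ) (hq : q ≠ 0) :
    Tendsto (fun c : ℂ => c⁻¹ • RDel c q (-(q * z))) (cobounded ℂ) (nhds (Dlim q z)) ∧
    negExcept00 (Dlim q z) =
      wtMat 1 (-(q ^ 2 * z)) q⁻¹ (q * z) ((1 - q ^ 2) * z) 1 := by
  constructor
  · set B : Matrix (Fin 4) (Fin 4) ℂ :=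
      !![q * z, 0, 0, 0;
         0, -(q * z) * q, -((q⁻¹ - q) * (-(q * z))), 0;
         0, -1, -1, 0;
         0, 0, 0, q⁻¹] with hB
    have hkey : ∀ c : ℂ, c ≠ 0 →
        c⁻¹ • RDel c q (-(q * z)) = Dlim q z + c⁻¹ • B := by
      intro c hc
      ext i j
      fin_cases i <;> fin_cases j <;>
        simp [RDel, Dlim, hB, Matrix.smul_apply, Matrix.add_apply, Matrix.vecHead, Matrix.vecTail] <;>
        field_simp <;> ring_nf <;> tauto
    have h1 : Tendsto (fun c : ℂ => Dlim q z + c⁻¹ • B) (cobounded ℂ)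
        (nhds (Dlim q z)) := by
      have : Tendsto (fun c : ℂ => c⁻¹ • B) (cobounded ℂ) (nhds ((0:ℂ) • B)) :=
        Filter.tendsto_inv₀_cobounded.smul_const B
      simpa using tendsto_const_nhds.add this
    refine h1.congr' ?_
    filter_upwards [eventually_ne_cobounded (0:ℂ)] with c hc
    exact (hkey c hc).symm
  · ext i j
    fin_cases i <;> fin_cases j <;>
      simp [negExcept00, Dlim, wtMat, Matrix.vecHead, Matrix.vecTail] <;> ring
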